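/- arXiv:2508.04376 — 5 statements merged into one kernel-verified Lean document; each statement's English description precedes it below -/
import Mathlib

section
/- Under the stated hypotheses, for every nonempty relatively open subset U of σ(S), the glocal spectral subspace 𝔛_S(Ū) is dense in X, where Ū denotes the closure of U. -/
/-- The glocal spectral subspace `𝔛_T(F)`: all `y` admitting an analytic solution
`g : ℂ ∖ F → X` of `(T - z) g z = y`. -/
def glocalSubspace {X : Type*} [NormedAddCommGroup X] [NormedSpace ℂ X]
    (T : X →L[ℂ] X) (F : Set ℂ) : Set X :=
  {y | ∃ g : ℂ → X, DifferentiableOn ℂ g Fᶜ ∧ ∀ z ∈ Fᶜ, T (g z) - z • g z = y}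


open Set Complex

lemma eig_mem_spectrum {X : Type*} [NormedAddCommGroup X] [NormedSpace ℂ X] [CompleteSpace X]
    (S : X →L[ℂ] X) {c : ℂ} {x : X} (hx : x ≠ 0) (h : S x = c • x) : c ∈ spectrum ℂ S := by
  rw [spectrum.mem_iff]
  intro hunit
  apply hx
  have h0 : (algebraMap ℂ (X →L[ℂ] X) c - S) x = 0 := by
    simp [Algebra.algebraMap_eq_smul_one, h]
  have h1 : (↑hunit.unit⁻¹ * ↑hunit.unit : X →L[ℂ] X) x = x := by
    rw [hunit.unit.inv_mul]; rfl
  rw [ContinuousLinearMap.mul_apply, IsUnit.unit_spec, h0, map_zero] at h1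
  exact h1.symm

lemma submodule_dense_of_dual {X : Type*} [NormedAddCommGroup X] [NormedSpace ℂ X]
    (p : Submodule ℂ X)
    (h : ∀ φ : X →L[ℂ] ℂ, (∀ y ∈ p, φ y = 0) → φ = 0) :
    Dense (p : Set X) := by
  rw [dense_iff_closure_eq]
  by_contra hne
  obtain ⟨x, hx⟩ : ∃ x, x ∉ closure (p : Set X) := by
    by_contra h'; push_neg at h'; exact hne (Set.eq_univ_iff_forall.2 h')
  have hconv : Convex ℝ (closure (p : Set X)) := (p.restrictScalars ℝ).convex.closure
  obtain ⟨φ, u, hu, hux⟩ :=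
    RCLike.geometric_hahn_banach_closed_point (𝕜 := ℂ) hconv isClosed_closure hx
  have hvanish : ∀ y ∈ p, φ y = 0 := by
    intro y hy
    by_contra hφy
    have key := hu _ (subset_closure (p.smul_mem ((max u 0 + 1 : ℝ) / φ y) hy))
    rw [map_smul, smul_eq_mul, div_mul_cancel₀ _ hφy] at key
    simp at key
    have := le_max_left u 0
    linarith
  have hu0 := hu 0 (subset_closure p.zero_mem)
  rw [h φ hvanish] at hux
  simp only [ContinuousLinearMap.zero_apply, map_zero] at hux hu0
  linarith



def glocalSubmodule {X : Type*} [NormedAddCommGroup X] [NormedSpace ℂ X]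
    (T : X →L[ℂ] X) (F : Set ℂ) : Submodule ℂ X where
  carrier := glocalSubspace T F
  zero_mem' := ⟨0, differentiableOn_const 0, by simp⟩
  add_mem' := by
    rintro a b ⟨g, hg, hge⟩ ⟨k, hk, hke⟩
    refine ⟨g + k, hg.add hk, fun z hz => ?_⟩
    simp only [Pi.add_apply, map_add, smul_add]
    rw [show T (g z) + T (k z) - (z • g z + z • k z)
        = (T (g z) - z • g z) + (T (k z) - z • k z) by abel, hge z hz, hke z hz]
  smul_mem' := by
    rintro c a ⟨g, hg, hge⟩
    refine ⟨c • g, hg.const_smul c, fun z hz => ?_⟩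
    simp only [Pi.smul_apply, map_smul]
    rw [smul_comm z c, ← smul_sub, hge z hz]

lemma mem_glocal_of_eigen {X : Type*} [NormedAddCommGroup X] [NormedSpace ℂ X]
    (S : X →L[ℂ] X) (F : Set ℂ) {c : ℂ} {x : X} (hc : c ∈ F) (h : S x = c • x) :
    x ∈ glocalSubspace S F := by
  refine ⟨fun z => (c - z)⁻¹ • x, ?_, fun z hz => ?_⟩
  · refine (((differentiableOn_const c).sub differentiableOn_id).inv ?_).smul_const x
    intro z hz
    intro e
    have hz' : z ∉ F := hz
    have e : c = z := sub_eq_zero.mp e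
    exact hz' (e ▸ hc)
  · have hne : c - z ≠ 0 := sub_ne_zero.2 fun e => hz (e ▸ hc)
    rw [map_smul, h, smul_smul, smul_smul, ← sub_smul]
    have : (c - z)⁻¹ * c - z * (c - z)⁻¹ = 1 := by field_simp
    rw [this, one_smul]


/-- under the eigenvector-family hypotheses (dense span of the analytic
eigenvector family, spectrum contained in the closure of `Φ(G)`), for every nonempty
relatively open subset `U` of `σ(S)`, the glocal spectral subspace `𝔛_S(Ū)` is dense. -/
theorem stmt_3 (X : Type*) [NormedAddCommGroup X] [NormedSpace ℂ X] [CompleteSpace X]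
    (S : X →L[ℂ] X)
    (G : Set ℂ) (hG : IsOpen G) (hGne : G.Nonempty) (hGconn : IsConnected G)
    (Φ : ℂ → ℂ) (hΦ : DifferentiableOn ℂ Φ G) (hΦnc : ∃ a ∈ G, ∃ b ∈ G, Φ a ≠ Φ b)
    (f : ℂ → X) (hf : DifferentiableOn ℂ f G)
    (hfne : ∀ w ∈ G, f w ≠ 0) (heig : ∀ w ∈ G, S (f w) = Φ w • f w)
    (hdense : Dense (Submodule.span ℂ (f '' G) : Set X))
    (hspec : spectrum ℂ S ⊆ closure (Φ '' G))
    (U : Set ℂ) (hUne : U.Nonempty)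
    (hUopen : ∃ V : Set ℂ, IsOpen V ∧ U = V ∩ spectrum ℂ S) :
    Dense (glocalSubspace S (closure U)) := by
  obtain ⟨V, hV, hUV⟩ := hUopen
  set G' := G ∩ Φ ⁻¹' V with hG'def
  have hG'open : IsOpen G' := hΦ.continuousOn.isOpen_inter_preimage hG hV
  -- G' is nonempty
  obtain ⟨μ, hμ⟩ := hUne
  have hμV : μ ∈ V := (hUV ▸ hμ).1
  have hμcl : μ ∈ closure (Φ '' G) := hspec (hUV ▸ hμ).2
  obtain ⟨z, hzV, hzim⟩ := (mem_closure_iff.mp hμcl) V hV hμV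
  obtain ⟨w₀, hw₀G, rfl⟩ := hzim
  have hw₀ : w₀ ∈ G' := ⟨hw₀G, hzV⟩
  -- eigenvalues over G' lie in closure U
  have hΦU : ∀ w ∈ G', Φ w ∈ closure U := by
    intro w hw
    have hspecw : Φ w ∈ spectrum ℂ S :=
      eig_mem_spectrum S (hfne w hw.1) (heig w hw.1)
    exact subset_closure (hUV ▸ ⟨hw.2, hspecw⟩)
  -- eigenvectors over G' lie in the glocal subspace
  have hmem : ∀ w ∈ G', f w ∈ glocalSubmodule S (closure U) := fun w hw =>
    mem_glocal_of_eigen S (closure U) (hΦU w hw) (heig w hw.1)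
  -- span of f '' G' is dense
  have hspan : Dense ((Submodule.span ℂ (f '' G') : Submodule ℂ X) : Set X) := by
    apply submodule_dense_of_dual
    intro φ hφ
    have hφ0 : ∀ w ∈ G', φ (f w) = 0 := fun w hw =>
      hφ _ (Submodule.subset_span (Set.mem_image_of_mem f hw))
    -- identity theorem for φ ∘ f
    have hana : AnalyticOnNhd ℂ (fun w => φ (f w)) G :=
      (φ.differentiable.comp_differentiableOn hf).analyticOnNhd hG
    have hev : (fun w => φ (f w)) =ᶠ[nhds w₀] 0 :=
      Filter.eventuallyEq_of_mem (hG'open.mem_nhds hw₀) hφ0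
    have hall : Set.EqOn (fun w => φ (f w)) 0 G :=
      hana.eqOn_zero_of_preconnected_of_eventuallyEq_zero hGconn.isPreconnected hw₀G hev
    -- hence φ vanishes on span (f '' G), then everywhere by density
    have hker : (Submodule.span ℂ (f '' G) : Set X) ⊆ {x | φ x = 0} := by
      intro x hx
      refine Submodule.span_induction ?_ (by simp)
        (fun a b _ _ ha hb => by
          simp only [Set.mem_setOf_eq] at ha hb ⊢; rw [map_add, ha, hb, add_zero])
        (fun c a _ ha => by
          simp only [Set.mem_setOf_eq] at ha ⊢; rw [map_smul, ha, smul_zero]) hx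
      rintro y ⟨w, hwG, rfl⟩
      exact hall hwG
    have hclosed : IsClosed {x : X | φ x = 0} := isClosed_eq φ.continuous continuous_const
    have : (Set.univ : Set X) ⊆ {x | φ x = 0} := by
      rw [← hdense.closure_eq]
      exact closure_minimal hker hclosed
    ext x
    exact this (Set.mem_univ x)
  -- conclude
  have hsub : ((Submodule.span ℂ (f '' G') : Submodule ℂ X) : Set X)
      ⊆ glocalSubspace S (closure U) := by
    have : Submodule.span ℂ (f '' G') ≤ glocalSubmodule S (closure U) := by
      rw [Submodule.span_le]
      rintro y ⟨w, hw, rfl⟩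
      exact hmem w hw
    exact this
  exact hspan.mono hsub
end

section
/- Under the stated hypotheses, the adjoint S′ of S (acting on the continuous dual X′) has empty point spectrum: if φ ∈ X′ and μ ∈ ℂ satisfy S′φ = μ·φ, then φ = 0. -/
/-- The adjoint of `S` acting on the continuous dual: `(dualOp S φ) x = φ (S x)`. -/
noncomputable def dualOp {X : Type*} [NormedAddCommGroup X] [NormedSpace ℂ X]
    (S : X →L[ℂ] X) : (X →L[ℂ] ℂ) →L[ℂ] (X →L[ℂ] ℂ) :=
  (ContinuousLinearMap.compL ℂ X X ℂ).flip S

/-- under the eigenvector-family hypotheses, the adjoint `S′` has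
empty point spectrum. -/
theorem stmt_4 (X : Type*) [NormedAddCommGroup X] [NormedSpace ℂ X] [CompleteSpace X]
    (S : X →L[ℂ] X)
    (G : Set ℂ) (hG : IsOpen G) (hGne : G.Nonempty) (hGconn : IsConnected G)
    (Φ : ℂ → ℂ) (hΦ : DifferentiableOn ℂ Φ G) (hΦnc : ∃ a ∈ G, ∃ b ∈ G, Φ a ≠ Φ b)
    (f : ℂ → X) (hf : DifferentiableOn ℂ f G)
    (hfne : ∀ w ∈ G, f w ≠ 0) (heig : ∀ w ∈ G, S (f w) = Φ w • f w)
    (hdense : Dense (Submodule.span ℂ (f '' G) : Set X))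
    (hspec : spectrum ℂ S ⊆ closure (Φ '' G))
    (φ : X →L[ℂ] ℂ) (μ : ℂ) (hφ : dualOp S φ = μ • φ) :
    φ = 0 := by
  classical
  -- key identity: (Φ w - μ) * φ (f w) = 0 on G
  have hkey : ∀ w ∈ G, (Φ w - μ) * φ (f w) = 0 := by
    intro w hw
    have h1 : φ (S (f w)) = μ * φ (f w) := by
      have := ContinuousLinearMap.ext_iff.mp hφ (f w)
      simpa [dualOp] using this
    have h2 : φ (S (f w)) = Φ w * φ (f w) := by
      rw [heig w hw]; simp
    rw [sub_mul, ← h2, h1]; ring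
  -- a point where Φ ≠ μ
  obtain ⟨a, ha, b, hb, hab⟩ := hΦnc
  obtain ⟨w₀, hw₀, hΦw₀⟩ : ∃ w ∈ G, Φ w ≠ μ := by
    by_cases h : Φ a = μ
    · exact ⟨b, hb, fun hbμ => hab (by rw [h, hbμ])⟩
    · exact ⟨a, ha, h⟩
  -- g is analytic on G
  set g : ℂ → ℂ := fun w => φ (f w) with hg_def
  have hgdiff : DifferentiableOn ℂ g G := φ.differentiable.comp_differentiableOn hf
  have hgan : AnalyticOnNhd ℂ g G := hgdiff.analyticOnNhd hG
  -- g vanishes near w₀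
  have hopen : IsOpen (G ∩ Φ ⁻¹' {μ}ᶜ) :=
    hΦ.continuousOn.isOpen_inter_preimage hG isOpen_compl_singleton
  have hmem : w₀ ∈ G ∩ Φ ⁻¹' {μ}ᶜ := ⟨hw₀, hΦw₀⟩
  have hev : g =ᶠ[nhds w₀] 0 := by
    filter_upwards [hopen.mem_nhds hmem] with w hw
    have := hkey w hw.1
    have hne : Φ w - μ ≠ 0 := sub_ne_zero.mpr hw.2
    exact (mul_eq_zero.mp this).resolve_left hne
  -- identity theorem: g = 0 on G
  have hzero : Set.EqOn g 0 G :=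
    hgan.eqOn_zero_of_preconnected_of_eventuallyEq_zero hGconn.isPreconnected hw₀ hev
  -- φ vanishes on span of f '' G, hence everywhere by density
  have hspan : (Submodule.span ℂ (f '' G) : Set X) ⊆ {x | φ x = 0} := by
    intro x hx
    have : Submodule.span ℂ (f '' G) ≤ LinearMap.ker (φ : X →ₗ[ℂ] ℂ) := by
      rw [Submodule.span_le]
      rintro _ ⟨w, hw, rfl⟩
      exact hzero hw
    exact this hx
  ext x
  have : φ x = 0 := by
    have := Continuous.ext_on hdense φ.continuous continuous_const
      (fun y hy => hspan hy)
    exact congrFun this x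
  simpa using this
end

section
/- Under the stated hypotheses, for every closed set F ⊆ ℂ with F ⊊ σ(S), the local spectral subspace {φ ∈ X′ : σ_{S′}(φ) ⊆ F} of the adjoint S′ equals {0}. -/
/-- The local resolvent set `ρ_T(y)`: the union of all open `U ⊆ ℂ` admitting an
analytic `g : U → X` with `(T - z) g z = y` on `U`. -/
def localResolvent {X : Type*} [NormedAddCommGroup X] [NormedSpace ℂ X]
    (T : X →L[ℂ] X) (y : X) : Set ℂ :=
  {z | ∃ U : Set ℂ, IsOpen U ∧ z ∈ U ∧
    ∃ g : ℂ → X, DifferentiableOn ℂ g U ∧ ∀ w ∈ U, T (g w) - w • g w = y}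

/-- The local spectrum `σ_T(y) = ℂ ∖ ρ_T(y)`. -/
def localSpectrum {X : Type*} [NormedAddCommGroup X] [NormedSpace ℂ X]
    (T : X →L[ℂ] X) (y : X) : Set ℂ :=
  (localResolvent T y)ᶜ

set_option synthInstance.maxHeartbeats 400000 in
/-- under the eigenvector-family hypotheses, for every closed
`F ⊊ σ(S)`, the local spectral subspace `{φ ∈ X′ : σ_{S′}(φ) ⊆ F}` is `{0}`. -/
theorem stmt_5 (X : Type*) [NormedAddCommGroup X] [NormedSpace ℂ X] [CompleteSpace X]
    (S : X →L[ℂ] X)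
    (G : Set ℂ) (hG : IsOpen G) (hGne : G.Nonempty) (hGconn : IsConnected G)
    (Φ : ℂ → ℂ) (hΦ : DifferentiableOn ℂ Φ G) (hΦnc : ∃ a ∈ G, ∃ b ∈ G, Φ a ≠ Φ b)
    (f : ℂ → X) (hf : DifferentiableOn ℂ f G)
    (hfne : ∀ w ∈ G, f w ≠ 0) (heig : ∀ w ∈ G, S (f w) = Φ w • f w)
    (hdense : Dense (Submodule.span ℂ (f '' G) : Set X))
    (hspec : spectrum ℂ S ⊆ closure (Φ '' G))
    (F : Set ℂ) (hF : IsClosed F) (hFsub : F ⊂ spectrum ℂ S) :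
    {φ : X →L[ℂ] ℂ | localSpectrum (dualOp S) φ ⊆ F} = {0} := by
  ext φ
  simp only [Set.mem_setOf_eq, Set.mem_singleton_iff]
  constructor
  · intro hφ
    -- Step 1: φ (f λ) = 0 whenever λ ∈ G and Φ λ ∉ F
    have key : ∀ l ∈ G, Φ l ∉ F → φ (f l) = 0 := by
      intro l hl hΦl
      have hres : Φ l ∈ localResolvent (dualOp S) φ := by
        by_contra h
        exact hΦl (hφ h)
      obtain ⟨U, hU, hmem, g, hg, hgeq⟩ := hres
      have h2 := congrArg (fun ψ : X →L[ℂ] ℂ => ψ (f l)) (hgeq (Φ l) hmem)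
      simp only [ContinuousLinearMap.sub_apply, ContinuousLinearMap.smul_apply] at h2
      have h3 : dualOp S (g (Φ l)) (f l) = g (Φ l) (S (f l)) := rfl
      rw [h3, heig l hl, map_smul] at h2
      simpa using h2.symm
    -- Step 2: the set V = {z ∈ G | Φ z ∉ F} is open and nonempty
    have hVopen : IsOpen (G ∩ Φ ⁻¹' Fᶜ) :=
      hΦ.continuousOn.isOpen_inter_preimage hG hF.isOpen_compl
    obtain ⟨μ, hμS, hμF⟩ := Set.exists_of_ssubset hFsub
    have hμcl : μ ∈ closure (Φ '' G) := hspec hμS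
    obtain ⟨z, hzF, hzG⟩ := (mem_closure_iff.mp hμcl) Fᶜ hF.isOpen_compl hμF
    obtain ⟨l₀, hl₀G, hl₀eq⟩ := hzG
    have hl₀V : l₀ ∈ G ∩ Φ ⁻¹' Fᶜ := ⟨hl₀G, by rw [Set.mem_preimage, hl₀eq]; exact hzF⟩
    -- Step 3: identity theorem — λ ↦ φ (f λ) vanishes on all of G
    have hdiff : DifferentiableOn ℂ (fun z => φ (f z)) G :=
      (φ.differentiable.comp_differentiableOn hf)
    have han : AnalyticOnNhd ℂ (fun z => φ (f z)) G := hdiff.analyticOnNhd hG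
    have hzero : Set.EqOn (fun z => φ (f z)) 0 G := by
      apply han.eqOn_zero_of_preconnected_of_eventuallyEq_zero hGconn.isPreconnected
        hl₀G
      filter_upwards [hVopen.mem_nhds hl₀V] with w hw
      exact key w hw.1 hw.2
    -- Step 4: φ vanishes on a dense subspace, hence φ = 0
    have hsub : Submodule.span ℂ (f '' G) ≤ LinearMap.ker (φ : X →ₗ[ℂ] ℂ) := by
      rw [Submodule.span_le]
      rintro x ⟨w, hw, rfl⟩
      exact hzero hw
    have hK : IsClosed (LinearMap.ker (φ : X →ₗ[ℂ] ℂ) : Set X) := (isClosed_singleton.preimage φ.continuous : IsClosed (φ ⁻¹' {0}))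
    have hDK : Dense (LinearMap.ker (φ : X →ₗ[ℂ] ℂ) : Set X) := hdense.mono hsub
    have : (LinearMap.ker (φ : X →ₗ[ℂ] ℂ) : Set X) = Set.univ := by
      rw [← hK.closure_eq]; exact hDK.closure_eq
    ext x
    have hx : x ∈ (LinearMap.ker (φ : X →ₗ[ℂ] ℂ) : Set X) := this ▸ Set.mem_univ x
    simpa using hx
  · rintro rfl
    intro z hz
    exfalso
    apply hz
    refine ⟨Set.univ, isOpen_univ, Set.mem_univ z, fun _ => 0, ?_, ?_⟩
    · exact differentiableOn_const 0
    · intro w _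
      rw [map_zero, smul_zero, sub_zero]
end

section
/- Under the stated hypotheses, the adjoint S′ has Dunford's property (C): for every closed set F ⊆ ℂ, the local spectral subspace {φ ∈ X′ : σ_{S′}(φ) ⊆ F} is a norm-closed linear subspace of X′. -/
lemma dualOp_apply {X : Type*} [NormedAddCommGroup X] [NormedSpace ℂ X]
    (S : X →L[ℂ] X) (φ : X →L[ℂ] ℂ) (x : X) : dualOp S φ x = φ (S x) := rfl

lemma dualOp_linear {X : Type*} [NormedAddCommGroup X] [NormedSpace ℂ X]
    (A B : X →L[ℂ] X) (z : ℂ) :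
    dualOp (z • A - B) = z • dualOp A - dualOp B := by
  ext φ x
  simp [dualOp_apply, dualOp]

lemma dualOp_one {X : Type*} [NormedAddCommGroup X] [NormedSpace ℂ X] :
    dualOp (1 : X →L[ℂ] X) = 1 := by
  ext φ x; rfl

lemma dualOp_mul {X : Type*} [NormedAddCommGroup X] [NormedSpace ℂ X]
    (A B : X →L[ℂ] X) : dualOp (A * B) = dualOp B * dualOp A := by
  ext φ x; rfl

lemma dualOp_isUnit {X : Type*} [NormedAddCommGroup X] [NormedSpace ℂ X]
    {A : X →L[ℂ] X} (h : IsUnit A) : IsUnit (dualOp A) := by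
  obtain ⟨u, rfl⟩ := h
  refine ⟨⟨dualOp u.val, dualOp u.inv, ?_, ?_⟩, rfl⟩
  · rw [← dualOp_mul, u.inv_val, dualOp_one]
  · rw [← dualOp_mul, u.val_inv, dualOp_one]

set_option maxHeartbeats 2000000 in
set_option synthInstance.maxHeartbeats 1000000 in
/-- under the eigenvector-family hypotheses, the adjoint `S′` has
Dunford's property (C): for every closed `F ⊆ ℂ`, the local spectral subspace
`{φ ∈ X′ : σ_{S′}(φ) ⊆ F}` is a norm-closed linear subspace of `X′`. -/
theorem stmt_6 (X : Type*) [NormedAddCommGroup X] [NormedSpace ℂ X] [CompleteSpace X]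
    (S : X →L[ℂ] X)
    (G : Set ℂ) (hG : IsOpen G) (hGne : G.Nonempty) (hGconn : IsConnected G)
    (Φ : ℂ → ℂ) (hΦ : DifferentiableOn ℂ Φ G) (hΦnc : ∃ a ∈ G, ∃ b ∈ G, Φ a ≠ Φ b)
    (f : ℂ → X) (hf : DifferentiableOn ℂ f G)
    (hfne : ∀ w ∈ G, f w ≠ 0) (heig : ∀ w ∈ G, S (f w) = Φ w • f w)
    (hdense : Dense (Submodule.span ℂ (f '' G) : Set X))
    (hspec : spectrum ℂ S ⊆ closure (Φ '' G))
    (F : Set ℂ) (hF : IsClosed F) :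
    ∃ M : Submodule ℂ (X →L[ℂ] ℂ),
      (M : Set (X →L[ℂ] ℂ)) = {φ : X →L[ℂ] ℂ | localSpectrum (dualOp S) φ ⊆ F} ∧
      IsClosed (M : Set (X →L[ℂ] ℂ)) := by
  by_cases hcase : ∀ w ∈ G, Φ w ∈ F
  · -- Case 1 : Φ(G) ⊆ F, hence σ(S′) ⊆ F and every functional qualifies.
    have hclos : closure (Φ '' G) ⊆ F :=
      closure_minimal (by rintro _ ⟨w, hw, rfl⟩; exact hcase w hw) hF
    have hunit : ∀ w ∉ F,
        IsUnit (@algebraMap ℂ ((X →L[ℂ] ℂ) →L[ℂ] (X →L[ℂ] ℂ)) _ ContinuousLinearMap.semiring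
          ContinuousLinearMap.algebra w - dualOp S) := by
      intro w hw
      have h1 : IsUnit (algebraMap ℂ (X →L[ℂ] X) w - S) := by
        rw [← spectrum.notMem_iff]
        exact fun hmem => hw (hclos (hspec hmem))
      have h2 := dualOp_isUnit h1
      rw [Algebra.algebraMap_eq_smul_one, dualOp_linear, dualOp_one] at h2
      rwa [Algebra.algebraMap_eq_smul_one]
    refine ⟨⊤, ?_, by rw [Submodule.top_coe]; exact isClosed_univ⟩
    rw [Submodule.top_coe]
    ext φ
    simp only [Set.mem_univ, true_iff, Set.mem_setOf_eq]
    intro z hz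
    by_contra hzF
    refine hz ⟨Fᶜ, hF.isOpen_compl, hzF,
      fun w => -(Ring.inverse (@algebraMap ℂ ((X →L[ℂ] ℂ) →L[ℂ] (X →L[ℂ] ℂ)) _ ContinuousLinearMap.semiring ContinuousLinearMap.algebra w - dualOp S) φ),
      ?_, ?_⟩
    · intro w hw
      have heqf : (fun w : ℂ => @algebraMap ℂ ((X →L[ℂ] ℂ) →L[ℂ] (X →L[ℂ] ℂ)) _ ContinuousLinearMap.semiring ContinuousLinearMap.algebra w - dualOp S)
          = fun w : ℂ => w • (1 : (X →L[ℂ] ℂ) →L[ℂ] (X →L[ℂ] ℂ)) - dualOp S :=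
        funext fun w => by rw [Algebra.algebraMap_eq_smul_one]
      have haff : DifferentiableWithinAt ℂ
          (fun w : ℂ => @algebraMap ℂ ((X →L[ℂ] ℂ) →L[ℂ] (X →L[ℂ] ℂ)) _ ContinuousLinearMap.semiring ContinuousLinearMap.algebra w - dualOp S) Fᶜ w := by
        rw [heqf]
        haveI : IsBoundedSMul ℂ ((X →L[ℂ] ℂ) →L[ℂ] (X →L[ℂ] ℂ)) :=
          @NormedSpace.toIsBoundedSMul ℂ _ _ _ ContinuousLinearMap.toNormedSpace
        exact ((differentiableWithinAt_id : DifferentiableWithinAt ℂ (fun w : ℂ => w) Fᶜ w).smul_const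
          ((1 : (X →L[ℂ] ℂ) →L[ℂ] (X →L[ℂ] ℂ)))).sub_const (dualOp S)
      exact (((haff.inverse (hunit w hw)).clm_apply
        (differentiableWithinAt_const φ)).neg)
    · intro w hw
      have hu := hunit w hw
      have h1 : (@algebraMap ℂ ((X →L[ℂ] ℂ) →L[ℂ] (X →L[ℂ] ℂ)) _ ContinuousLinearMap.semiring ContinuousLinearMap.algebra w - dualOp S) *
          Ring.inverse (@algebraMap ℂ ((X →L[ℂ] ℂ) →L[ℂ] (X →L[ℂ] ℂ)) _ ContinuousLinearMap.semiring ContinuousLinearMap.algebra w - dualOp S) = 1 :=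
        Ring.mul_inverse_cancel _ hu
      have h2 := congrArg
        (fun B : (X →L[ℂ] ℂ) →L[ℂ] (X →L[ℂ] ℂ) => B φ) h1
      simp only [ContinuousLinearMap.mul_apply, ContinuousLinearMap.sub_apply,
        Algebra.algebraMap_eq_smul_one, ContinuousLinearMap.smul_apply,
        ContinuousLinearMap.one_apply] at h2
      simp only [Algebra.algebraMap_eq_smul_one, map_neg, smul_neg, sub_neg_eq_add,
        neg_add_eq_sub]
      exact h2
  · -- Case 2 : some Φ(l0) ∉ F; then the local spectral subspace is {0}.
    push_neg at hcase
    obtain ⟨l0, hl0G, hl0F⟩ := hcase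
    refine ⟨⊥, ?_, by rw [Submodule.bot_coe]; exact isClosed_singleton⟩
    rw [Submodule.bot_coe]
    ext φ
    simp only [Set.mem_singleton_iff, Set.mem_setOf_eq]
    constructor
    · rintro rfl z hz
      exact (hz ⟨Set.univ, isOpen_univ, trivial, 0, differentiableOn_const 0,
        fun w _ => by simp⟩).elim
    · intro h
      have hvan : ∀ μ ∈ G, Φ μ ∉ F → φ (f μ) = 0 := by
        intro μ hμ hμF
        have hres : Φ μ ∈ localResolvent (dualOp S) φ := by
          by_contra hc; exact hμF (h hc)
        obtain ⟨U, hU, hmem, g, hg, heq⟩ := hres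
        have h2 := congrArg (fun ψ : X →L[ℂ] ℂ => ψ (f μ)) (heq (Φ μ) hmem)
        simp only [ContinuousLinearMap.sub_apply, ContinuousLinearMap.smul_apply,
          dualOp_apply, heig μ hμ, map_smul, smul_eq_mul, sub_self] at h2
        exact h2.symm
      have hVopen : IsOpen (G ∩ Φ ⁻¹' Fᶜ) :=
        hΦ.continuousOn.isOpen_inter_preimage hG hF.isOpen_compl
      have huan : AnalyticOnNhd ℂ (fun lam => φ (f lam)) G :=
        ((φ.differentiable.comp_differentiableOn hf).analyticOnNhd hG)
      have hev : (fun lam => φ (f lam)) =ᶠ[nhds l0] 0 :=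
        Filter.eventuallyEq_of_mem (hVopen.mem_nhds ⟨hl0G, hl0F⟩)
          (fun x hx => hvan x hx.1 hx.2)
      have hzero : Set.EqOn (fun lam => φ (f lam)) 0 G :=
        huan.eqOn_zero_of_preconnected_of_eventuallyEq_zero
          hGconn.isPreconnected hl0G hev
      have hle : Submodule.span ℂ (f '' G) ≤ LinearMap.ker φ :=
        Submodule.span_le.2 (by rintro _ ⟨lam, hlam, rfl⟩
                                exact LinearMap.mem_ker.2 (by exact hzero hlam))
      have hfun : (φ : X → ℂ) = 0 :=
        Continuous.ext_on hdense φ.continuous continuous_zero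
          (fun x hx => hle hx)
      exact ContinuousLinearMap.ext fun x => congrFun hfun x
end

section
/- Under the stated hypotheses, the local spectrum of the adjoint S′ at every nonzero functional equals the spectrum of S: σ_{S′}(φ) = σ(S) for every φ ∈ X′ with φ ≠ 0. -/
lemma aux_res {Y : Type*} [NormedAddCommGroup Y] [NormedSpace ℂ Y] [CompleteSpace Y]
    (T : Y →L[ℂ] Y) (y : Y) (z : ℂ) (hz : z ∈ resolventSet ℂ T) :
    z ∈ localResolvent T y := by
  refine ⟨resolventSet ℂ T, spectrum.isOpen_resolventSet _, hz,
    fun w => -(resolvent T w y), ?_, ?_⟩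
  · intro w hw
    exact (((spectrum.hasDerivAt_resolvent hw).differentiableAt.clm_apply
      (differentiableAt_const y)).neg).differentiableWithinAt
  · intro w hw
    have h1 : (algebraMap ℂ (Y →L[ℂ] Y) w - T) * resolvent T w = 1 :=
      Ring.mul_inverse_cancel _ hw
    have h2 := congrArg (fun A : Y →L[ℂ] Y => A y) h1
    simp only [ContinuousLinearMap.mul_apply, ContinuousLinearMap.sub_apply,
      ContinuousLinearMap.one_apply, Algebra.algebraMap_eq_smul_one,
      ContinuousLinearMap.smul_apply] at h2
    rw [map_neg, smul_neg, sub_neg_eq_add, neg_add_eq_sub]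
    simpa using h2

set_option synthInstance.maxHeartbeats 1000000 in
lemma dualOp_algebraMap_sub {X : Type*} [NormedAddCommGroup X] [NormedSpace ℂ X]
    (w : ℂ) (S : X →L[ℂ] X) :
    dualOp (algebraMap ℂ (X →L[ℂ] X) w - S)
      = @algebraMap ℂ ((X →L[ℂ] ℂ) →L[ℂ] (X →L[ℂ] ℂ)) _ ContinuousLinearMap.semiring _ w - (dualOp S : (X →L[ℂ] ℂ) →L[ℂ] (X →L[ℂ] ℂ)) := by
  ext ψ x
  simp [dualOp, Algebra.algebraMap_eq_smul_one]

set_option synthInstance.maxHeartbeats 1000000 in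
lemma dualOp_resolventSet {X : Type*} [NormedAddCommGroup X] [NormedSpace ℂ X]
    (S : X →L[ℂ] X) (w : ℂ) (hw : w ∈ resolventSet ℂ S) :
    w ∈ resolventSet ℂ (dualOp S) := by
  rw [spectrum.mem_resolventSet_iff] at hw ⊢
  have e : @algebraMap ℂ ((X →L[ℂ] ℂ) →L[ℂ] (X →L[ℂ] ℂ)) _ ContinuousLinearMap.semiring _ w - (dualOp S : (X →L[ℂ] ℂ) →L[ℂ] (X →L[ℂ] ℂ)) = dualOp ↑hw.unit := by
    rw [IsUnit.unit_spec, dualOp_algebraMap_sub]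
  rw [e]
  refine isUnit_iff_exists.mpr ⟨dualOp ↑hw.unit⁻¹, ?_, ?_⟩
  · rw [← dualOp_mul, Units.inv_mul, dualOp_one]
  · rw [← dualOp_mul, Units.mul_inv, dualOp_one]

/-- under the eigenvector-family hypotheses, the local spectrum of the
adjoint `S′` at every nonzero functional equals the spectrum of `S`. -/
theorem stmt_7 (X : Type*) [NormedAddCommGroup X] [NormedSpace ℂ X] [CompleteSpace X]
    (S : X →L[ℂ] X)
    (G : Set ℂ) (hG : IsOpen G) (hGne : G.Nonempty) (hGconn : IsConnected G)
    (Φ : ℂ → ℂ) (hΦ : DifferentiableOn ℂ Φ G) (hΦnc : ∃ a ∈ G, ∃ b ∈ G, Φ a ≠ Φ b)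
    (f : ℂ → X) (hf : DifferentiableOn ℂ f G)
    (hfne : ∀ w ∈ G, f w ≠ 0) (heig : ∀ w ∈ G, S (f w) = Φ w • f w)
    (hdense : Dense (Submodule.span ℂ (f '' G) : Set X))
    (hspec : spectrum ℂ S ⊆ closure (Φ '' G))
    (φ : X →L[ℂ] ℂ) (hφ : φ ≠ 0) :
    localSpectrum (dualOp S) φ = spectrum ℂ S := by
  have key : localResolvent (dualOp S) φ = (spectrum ℂ S)ᶜ := by
    apply Set.Subset.antisymm
    · intro z hz
      intro hzs
      obtain ⟨U, hU, hzU, g, hg, heqg⟩ := hz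
      obtain ⟨y, hyU, l0, hl0G, hl0⟩ := mem_closure_iff.mp (hspec hzs) U hU hzU
      set V : Set ℂ := G ∩ Φ ⁻¹' U with hVdef
      have hVopen : IsOpen V := by
        rw [isOpen_iff_mem_nhds]
        rintro μ ⟨hμG, hμU⟩
        have hc : ContinuousAt Φ μ :=
          ((hΦ μ hμG).differentiableAt (hG.mem_nhds hμG)).continuousAt
        exact Filter.inter_mem (hG.mem_nhds hμG) (hc (hU.mem_nhds hμU))
      have hl0V : l0 ∈ V := ⟨hl0G, by simp only [Set.mem_preimage, hl0]; exact hyU⟩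
      have hzero : ∀ μ ∈ V, φ (f μ) = 0 := by
        rintro μ ⟨hμG, hμU⟩
        have e := heqg (Φ μ) hμU
        have e2 := congrArg (fun ψ : X →L[ℂ] ℂ => ψ (f μ)) e
        simp only [ContinuousLinearMap.sub_apply, ContinuousLinearMap.smul_apply] at e2
        rw [← e2]
        show (g (Φ μ)) (S (f μ)) - Φ μ • (g (Φ μ)) (f μ) = 0
        rw [heig μ hμG, map_smul]
        simp
      have hAn : AnalyticOnNhd ℂ (fun μ => φ (f μ)) G :=
        (φ.differentiable.comp_differentiableOn hf).analyticOnNhd hG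
      have hev : (fun μ => φ (f μ)) =ᶠ[nhds l0] 0 :=
        Filter.eventually_of_mem (hVopen.mem_nhds hl0V) hzero
      have hEq := hAn.eqOn_zero_of_preconnected_of_eventuallyEq_zero
        hGconn.isPreconnected hl0G hev
      have hker : Submodule.span ℂ (f '' G) ≤ LinearMap.ker (φ : X →ₗ[ℂ] ℂ) := by
        rw [Submodule.span_le]
        rintro x ⟨μ, hμ, rfl⟩
        exact LinearMap.mem_ker.mpr (hEq hμ)
      have hcoe : ⇑φ = fun _ => (0 : ℂ) :=
        Continuous.ext_on hdense φ.continuous continuous_const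
          (fun x hx => LinearMap.mem_ker.mp (hker hx))
      exact hφ (ContinuousLinearMap.ext fun x => congrFun hcoe x)
    · intro z hz
      have hz' : z ∈ resolventSet ℂ S := by
        simpa [spectrum] using hz
      exact aux_res (dualOp S) φ z (dualOp_resolventSet S z hz')
  unfold localSpectrum
  rw [key, compl_compl]
end
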